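/- There exists a 3-colouring of the positive integers such that the only monochromatic solution to x + y = z^2 is x = y = z = 2. -/

import Mathlib

private def A : ℕ → ℕ
  | 0 => 1
  | 1 => 2
  | k+2 => 2^(2^k+1)

private lemma A_strictMono : StrictMono A := by
  apply strictMono_nat_of_lt_succ
  intro k
  match k with
  | 0 => decide
  | 1 => decide
  | k+2 =>
      show 2^(2^k+1) < 2^(2^(k+1)+1)
      apply Nat.pow_lt_pow_right one_lt_two
      have : 2^k < 2^(k+1) := Nat.pow_lt_pow_right one_lt_two (by omega)
      omega

private lemma A_mono {p q : ℕ} (h : p ≤ q) : A p ≤ A q := A_strictMono.monotone h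

private lemma Asq : ∀ m, A m ^ 2 ≤ A (m + 2)
  | 0 => by decide
  | 1 => by decide
  | m+2 => by
      show (2^(2^m+1))^2 ≤ 2^(2^(m+2)+1)
      rw [← pow_mul]
      apply Nat.pow_le_pow_right (by norm_num)
      have h1 : 2^(m+1) = 2 * 2^m := by ring
      have h2 : 2^(m+2) = 2 * 2^(m+1) := by ring
      have h3 : 0 < 2^m := Nat.pow_pos (by norm_num)
      omega

private lemma A2 : ∀ m, 2 * A (m + 3) ≤ A (m + 2) ^ 2 := by
  intro m
  show 2 * 2^(2^(m+1)+1) ≤ (2^(2^m+1))^2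
  rw [← pow_mul, ← pow_succ']
  apply Nat.pow_le_pow_right (by norm_num)
  have h1 : 2^(m+1) = 2 * 2^m := by ring
  omega

private def idx (n : ℕ) : ℕ := Nat.findGreatest (fun k => A k ≤ n) n

private lemma idx_le {n : ℕ} (hn : 0 < n) : A (idx n) ≤ n :=
  Nat.findGreatest_spec (P := fun k => A k ≤ n) (m := 0) (Nat.zero_le n) hn

private lemma lt_idx_succ (n : ℕ) : n < A (idx n + 1) := by
  by_contra h
  push_neg at h
  have hle : idx n ≤ n := Nat.findGreatest_le n
  rcases eq_or_lt_of_le hle with heq | hlt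
  · have h2 : n + 1 ≤ A (n + 1) := A_strictMono.le_apply
    rw [heq] at h
    omega
  · exact Nat.findGreatest_is_greatest (P := fun k => A k ≤ n) (n := n)
      (lt_add_one _) hlt h

private lemma idx1 : idx 1 = 0 := by decide
private lemma idx2 : idx 2 = 1 := by decide
private lemma idx3 : idx 3 = 1 := by decide

private lemma aux (x y z : ℕ) (hx : 0 < x) (hy : 0 < y) (hz : 0 < z)
    (hij : idx x ≤ idx y)
    (h1 : idx x % 3 = idx y % 3) (h2 : idx y % 3 = idx z % 3)
    (hsum : x + y = z ^ 2) : x = 2 ∧ y = 2 ∧ z = 2 := by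
  have hxl := idx_le hx
  have hyl := idx_le hy
  have hzl := idx_le hz
  have hxu := lt_idx_succ x
  have hyu := lt_idx_succ y
  have hzu := lt_idx_succ z
  rcases le_or_gt (idx y) (idx z) with hjk | hjk
  · rcases le_or_gt 2 (idx y) with hj2 | hj2
    · -- big case: z^2 too big
      exfalso
      obtain ⟨m, hm⟩ : ∃ m, idx y = m + 2 := ⟨idx y - 2, by omega⟩
      have hA2 := A2 m
      have hxA : x < A (idx y + 1) := lt_of_lt_of_le hxu (A_mono (by omega))
      have hk2 : A (idx y) ^ 2 ≤ A (idx z) ^ 2 :=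
        Nat.pow_le_pow_left (A_mono hjk) 2
      have hz2 : A (idx z) ^ 2 ≤ z ^ 2 := Nat.pow_le_pow_left hzl 2
      rw [hm] at hxA hyu hk2
      rw [show m + 2 + 1 = m + 3 by omega] at hxA hyu
      omega
    · -- small case
      have hx3 : x < 4 := lt_of_lt_of_le hxu (by
        have : idx x + 1 ≤ 2 := by omega
        calc A (idx x + 1) ≤ A 2 := A_mono this
        _ = 4 := by decide)
      have hy3 : y < 4 := lt_of_lt_of_le hyu (by
        have : idx y + 1 ≤ 2 := by omega
        calc A (idx y + 1) ≤ A 2 := A_mono this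
        _ = 4 := by decide)
      have hzle : z ≤ 2 := by nlinarith
      interval_cases z
      · exfalso; norm_num at hsum; omega
      · -- z = 2, x + y = 4
        have hx1 : x ≠ 1 := by
          intro h; rw [h, idx1] at h1
          rw [idx2] at h2; omega
        have hy1 : y ≠ 1 := by
          intro h; rw [h, idx1, idx2] at h2; omega
        have hs4 : x + y = 4 := by norm_num at hsum; omega
        refine ⟨by omega, by omega, rfl⟩
  · -- idx z < idx y, so idx z + 3 ≤ idx y
    exfalso
    have h3 : idx z + 3 ≤ idx y := by omega
    obtain ⟨m, hm⟩ : ∃ m, idx y = m + 2 := ⟨idx y - 2, by omega⟩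
    have hzA : z < A m := lt_of_lt_of_le hzu (A_mono (by omega))
    have hz2 : z ^ 2 < A m ^ 2 := Nat.pow_lt_pow_left hzA (by norm_num)
    have := Asq m
    rw [hm] at hyl
    omega

theorem stmt_0 :
    ∃ c : ℕ → Fin 3,
      ∀ x y z : ℕ, 0 < x → 0 < y → 0 < z →
        c x = c y → c y = c z → x + y = z ^ 2 →
        x = 2 ∧ y = 2 ∧ z = 2 := by
  refine ⟨fun n => ⟨idx n % 3, Nat.mod_lt _ (by norm_num)⟩, ?_⟩
  intro x y z hx hy hz hc1 hc2 hsum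
  simp only [Fin.mk.injEq] at hc1 hc2
  rcases le_total (idx x) (idx y) with h | h
  · exact aux x y z hx hy hz h hc1 hc2 hsum
  · obtain ⟨hy2, hx2, hz2⟩ := aux y x z hy hx hz h hc1.symm (hc1.trans hc2)
      (by omega)
    exact ⟨hx2, hy2, hz2⟩
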